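/- arXiv:2507.12008 — 2 statements merged into one kernel-verified Lean document; each statement's English description precedes it below -/
import Mathlib

section
/- Let x ∈ ℝ^d be nonzero and let D₁, D₂ : Ω → {0,1}^d be random masks whose 2d coordinates are mutually independent, each Bernoulli(1/2). Then Var(IP(D₁ ⊙ x, D₂ ⊙ x)) = (3/16) · (∑_{i=1}^d xᵢ⁴) / ‖x‖₂⁴. -/
open MeasureTheory ProbabilityTheory

/-- Element-wise (Hadamard) product of a mask `a` with a vector `x` in `ℝ^d`. -/
noncomputable def hadamard {d : ℕ} (a : Fin d → ℝ) (x : EuclideanSpace ℝ (Fin d)) :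
    EuclideanSpace ℝ (Fin d) :=
  WithLp.toLp 2 (fun i => a i * x i)

/-- Information preservation metric relative to the (nonzero) vector `x`:
`IP(x₁, x₂) = ⟨x₁, x₂⟩ / ‖x‖²`. -/
noncomputable def IP {d : ℕ} (x x₁ x₂ : EuclideanSpace ℝ (Fin d)) : ℝ :=
  (inner ℝ x₁ x₂ : ℝ) / ‖x‖ ^ 2

/-- For nonzero `x ∈ ℝ^d` and random masks `D₁, D₂ : Ω → {0,1}^d` whose `2d`
coordinates are mutually independent, each Bernoulli(1/2),
`Var(IP(D₁ ⊙ x, D₂ ⊙ x)) = (3/16) (∑ᵢ xᵢ⁴) / ‖x‖⁴`. -/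
theorem random_masks_variance_IP {d : ℕ}
    (x : EuclideanSpace ℝ (Fin d)) (hx : x ≠ 0)
    {Ω : Type*} [MeasureSpace Ω] [IsProbabilityMeasure (ℙ : Measure Ω)]
    (D₁ D₂ : Ω → Fin d → ℝ)
    (hbin : ∀ ω i, (D₁ ω i = 0 ∨ D₁ ω i = 1) ∧ (D₂ ω i = 0 ∨ D₂ ω i = 1))
    (hmeas : ∀ i, Measurable (fun ω => D₁ ω i) ∧ Measurable (fun ω => D₂ ω i))
    (hindep : iIndepFun
      (fun (p : Fin 2 × Fin d) ω => if p.1 = 0 then D₁ ω p.2 else D₂ ω p.2) ℙ)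
    (hber : ∀ i, ℙ {ω | D₁ ω i = 1} = 1/2 ∧ ℙ {ω | D₂ ω i = 1} = 1/2) :
    variance (fun ω => IP x (hadamard (D₁ ω) x) (hadamard (D₂ ω) x)) ℙ
      = (3/16) * (∑ i, (x i) ^ 4) / ‖x‖ ^ 4 := by
  classical
  set f : Fin 2 × Fin d → Ω → ℝ := fun p ω => if p.1 = 0 then D₁ ω p.2 else D₂ ω p.2 with hf
  have hfmeas : ∀ p, Measurable (f p) := by
    rintro ⟨a, i⟩
    fin_cases a
    · simpa [hf] using (hmeas i).1
    · simpa [hf] using (hmeas i).2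
  -- Z i = D₁ i * D₂ i
  set Z : Fin d → Ω → ℝ := fun i ω => D₁ ω i * D₂ ω i with hZ
  have hZf : ∀ i, Z i = f (0, i) * f (1, i) := by
    intro i; funext ω; simp [hZ, hf]
  have hZmeas : ∀ i, Measurable (Z i) := fun i => ((hmeas i).1.mul (hmeas i).2)
  have hZbound : ∀ i ω, ‖Z i ω‖ ≤ 1 := by
    intro i ω
    rcases (hbin ω i).1 with h | h <;> rcases (hbin ω i).2 with h' | h' <;>
      simp [hZ, h, h']
  have hZmem : ∀ i, MemLp (Z i) 2 ℙ := fun i =>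
    (memLp_top_of_bound (hZmeas i).aestronglyMeasurable 1
      (Filter.Eventually.of_forall (hZbound i))).mono_exponent le_top
  -- expectation of Z i is 1/4
  have hZsq : ∀ i, (Z i) ^ 2 = Z i := by
    intro i; funext ω
    rcases (hbin ω i).1 with h | h <;> rcases (hbin ω i).2 with h' | h' <;>
      simp [hZ, h, h']
  have hEZ : ∀ i, (∫ ω, Z i ω) = 1/4 := by
    intro i
    set A : Set Ω := {ω | D₁ ω i = 1} ∩ {ω | D₂ ω i = 1} with hA
    have hAmeas : MeasurableSet A :=
      ((hmeas i).1 (measurableSet_singleton 1)).inter ((hmeas i).2 (measurableSet_singleton 1))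
    have hZind : Z i = A.indicator (fun _ => (1 : ℝ)) := by
      funext ω
      by_cases hω : ω ∈ A
      · have h1 : D₁ ω i = 1 := hω.1
        have h2 : D₂ ω i = 1 := hω.2
        simp [hZ, Set.indicator_of_mem hω, h1, h2]
      · rw [Set.indicator_of_notMem hω]
        rcases (hbin ω i).1 with h | h <;> rcases (hbin ω i).2 with h' | h' <;>
          simp [hZ, h, h'] <;> exact absurd ⟨h, h'⟩ hω
    have hPA : ℙ A = 1/4 := by
      have hne : ((0 : Fin 2), i) ≠ ((1 : Fin 2), i) := by simp
      have hind := (hindep.indepFun hne).measure_inter_preimage_eq_mul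
        {1} {1} (measurableSet_singleton (1 : ℝ)) (measurableSet_singleton (1 : ℝ))
      have h1 : f (0, i) ⁻¹' {1} = {ω | D₁ ω i = 1} := by
        ext ω; simp [hf]
      have h2 : f (1, i) ⁻¹' {1} = {ω | D₂ ω i = 1} := by
        ext ω; simp [hf]
      rw [h1, h2] at hind
      rw [hA, hind, (hber i).1, (hber i).2]
      simp only [one_div]
      rw [(ENNReal.mul_inv (a := 2) (b := 2) (by norm_num) (by norm_num)).symm]
      norm_num
    rw [hZind, integral_indicator_const _ hAmeas, measureReal_def, hPA]
    norm_num
  -- variance of Z i is 3/16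
  have hVarZ : ∀ i, variance (Z i) ℙ = 3/16 := by
    intro i
    rw [variance_eq_sub (hZmem i), hZsq i]
    have h := hEZ i
    simp only [hZ] at h ⊢
    rw [h]
    norm_num
  -- the summands
  set Y : Fin d → Ω → ℝ := fun i ω => (x i) ^ 2 * Z i ω with hY
  have hYmem : ∀ i, MemLp (Y i) 2 ℙ := fun i => (hZmem i).const_mul _
  have hYindep : ∀ i ∈ Finset.univ, ∀ j ∈ Finset.univ, i ≠ j →
      IndepFun (Y i) (Y j) ℙ := by
    intro i _ j _ hij
    have hZZ : IndepFun (Z i) (Z j) ℙ := by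
      rw [hZf i, hZf j]
      exact hindep.indepFun_mul_mul hfmeas (0, i) (1, i) (0, j) (1, j)
        (by simp [hij]) (by simp) (by simp) (by simp [hij])
    have := hZZ.comp (measurable_const_mul ((x i) ^ 2)) (measurable_const_mul ((x j) ^ 2))
    exact this
  have hVarY : ∀ i, variance (Y i) ℙ = (x i) ^ 4 * (3/16) := by
    intro i
    rw [hY]
    rw [variance_const_mul ((x i) ^ 2) (Z i), hVarZ i]
    ring
  -- rewrite IP
  have hkey : (fun ω => IP x (hadamard (D₁ ω) x) (hadamard (D₂ ω) x))
      = fun ω => (‖x‖ ^ 2)⁻¹ * (∑ i, Y i) ω := by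
    funext ω
    simp only [IP, hadamard, PiLp.inner_apply, RCLike.inner_apply, conj_trivial,
      Finset.sum_apply, hY, hZ]
    rw [div_eq_inv_mul]
    congr 1
    exact Finset.sum_congr rfl fun i _ => by ring
  rw [hkey]
  rw [show (fun ω => (‖x‖ ^ 2)⁻¹ * (∑ i, Y i) ω)
      = fun ω => (‖x‖ ^ 2)⁻¹ * (∑ i, Y i) ω from rfl]
  rw [variance_const_mul ((‖x‖ ^ 2)⁻¹) (∑ i, Y i)]
  rw [IndepFun.variance_sum (fun i _ => hYmem i)
    (fun i _ j _ hij => hYindep i (Finset.mem_univ i) j (Finset.mem_univ j) hij)]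
  simp only [hVarY]
  have hxn : ‖x‖ ≠ 0 := norm_ne_zero_iff.mpr hx
  rw [← Finset.sum_mul]
  field_simp
end

section
/- Let x ∈ ℝ^d be nonzero and let D₁, D₂ : Ω → {0,1}^d be random masks whose 2d coordinates are mutually independent, each Bernoulli(1/2). Then Var(IP(D₁ ⊙ x, D₂ ⊙ x)) ≤ 3/16, since ∑_{i=1}^d xᵢ⁴ ≤ ‖x‖₂⁴. -/
open MeasureTheory ProbabilityTheory

/-- For nonzero `x ∈ ℝ^d` and random masks `D₁, D₂ : Ω → {0,1}^d` whose `2d`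
coordinates are mutually independent, each Bernoulli(1/2),
`Var(IP(D₁ ⊙ x, D₂ ⊙ x)) ≤ 3/16`, since `∑ᵢ xᵢ⁴ ≤ ‖x‖⁴`. -/
theorem random_masks_variance_IP_le {d : ℕ}
    (x : EuclideanSpace ℝ (Fin d)) (hx : x ≠ 0)
    {Ω : Type*} [MeasureSpace Ω] [IsProbabilityMeasure (ℙ : Measure Ω)]
    (D₁ D₂ : Ω → Fin d → ℝ)
    (hbin : ∀ ω i, (D₁ ω i = 0 ∨ D₁ ω i = 1) ∧ (D₂ ω i = 0 ∨ D₂ ω i = 1))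
    (hmeas : ∀ i, Measurable (fun ω => D₁ ω i) ∧ Measurable (fun ω => D₂ ω i))
    (hindep : iIndepFun
      (fun (p : Fin 2 × Fin d) ω => if p.1 = 0 then D₁ ω p.2 else D₂ ω p.2) ℙ)
    (hber : ∀ i, ℙ {ω | D₁ ω i = 1} = 1/2 ∧ ℙ {ω | D₂ ω i = 1} = 1/2) :
    variance (fun ω => IP x (hadamard (D₁ ω) x) (hadamard (D₂ ω) x)) ℙ ≤ 3/16 := by
  have hxne : ‖x‖ ≠ 0 := norm_ne_zero_iff.mpr hx
  have hn2pos : (0:ℝ) < ‖x‖ ^ 2 := by positivity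
  have hSnorm : ‖x‖ ^ 2 = ∑ i, (x i) ^ 2 := by
    rw [EuclideanSpace.norm_eq, Real.sq_sqrt (by positivity)]
    simp [sq_abs]
  -- the random variable
  set Y : Ω → ℝ := fun ω => (∑ i, D₁ ω i * D₂ ω i * (x i) ^ 2) / ‖x‖ ^ 2 with hY
  have hfY : (fun ω => IP x (hadamard (D₁ ω) x) (hadamard (D₂ ω) x)) = Y := by
    funext ω
    simp only [IP, hadamard, PiLp.inner_apply, RCLike.inner_apply, conj_trivial, hY]
    congr 1
    exact Finset.sum_congr rfl fun i _ => by ring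
  rw [hfY]
  -- each coefficient in {0,1}
  have hZ01 : ∀ ω i, D₁ ω i * D₂ ω i = 0 ∨ D₁ ω i * D₂ ω i = 1 := by
    intro ω i
    rcases (hbin ω i).1 with h1 | h1 <;> rcases (hbin ω i).2 with h2 | h2 <;>
      simp [h1, h2]
  -- bounds on Y
  have hY0 : ∀ ω, 0 ≤ Y ω := by
    intro ω
    apply div_nonneg _ hn2pos.le
    apply Finset.sum_nonneg
    intro i _
    rcases hZ01 ω i with h | h <;> simp [h] <;> positivity
  have hY1 : ∀ ω, Y ω ≤ 1 := by
    intro ω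
    rw [hY, div_le_one hn2pos, hSnorm]
    apply Finset.sum_le_sum
    intro i _
    rcases hZ01 ω i with h | h <;> simp [h] <;> positivity
  -- measurability
  have hYmeas : Measurable Y := by
    apply Measurable.div_const
    apply Finset.measurable_sum
    intro i _
    exact (((hmeas i).1.mul (hmeas i).2).mul measurable_const)
  have hYmem : MemLp Y 2 ℙ := by
    apply MemLp.of_bound hYmeas.aestronglyMeasurable 1
    filter_upwards with ω
    rw [Real.norm_eq_abs, abs_le]
    exact ⟨by linarith [hY0 ω], hY1 ω⟩
  -- expectations of coordinates
  have hED : ∀ (D : Ω → Fin d → ℝ) (i : Fin d), (∀ ω, D ω i = 0 ∨ D ω i = 1) →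
      Measurable (fun ω => D ω i) → ℙ {ω | D ω i = 1} = 1/2 →
      ∫ ω, D ω i ∂ℙ = 1/2 := by
    intro D i hb hm hp
    have hset : MeasurableSet {ω | D ω i = 1} := hm (measurableSet_singleton 1)
    have heq : (fun ω => D ω i) = Set.indicator {ω | D ω i = 1} (fun _ => (1:ℝ)) := by
      funext ω
      rcases hb ω with h | h <;> simp [h, Set.indicator_apply]
    rw [heq]
    have := integral_indicator_one (μ := (ℙ : Measure Ω)) hset
    refine Eq.trans rfl (this.trans ?_)
    rw [measureReal_def, hp]
    norm_num
  -- independence of D₁ i and D₂ i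
  have hindep2 : ∀ i, IndepFun (fun ω => D₁ ω i) (fun ω => D₂ ω i) ℙ := by
    intro i
    have h := hindep.indepFun (i := ((0 : Fin 2), i)) (j := ((1 : Fin 2), i))
      (by simp [Prod.ext_iff])
    simpa using h
  -- expectation of each product
  have hEZ : ∀ i, ∫ ω, D₁ ω i * D₂ ω i ∂ℙ = 1/4 := by
    intro i
    have hm := (hindep2 i).integral_mul_eq_mul_integral (hmeas i).1.aestronglyMeasurable
      (hmeas i).2.aestronglyMeasurable
    have : ∫ ω, D₁ ω i * D₂ ω i ∂ℙ
        = (∫ ω, D₁ ω i ∂ℙ) * ∫ ω, D₂ ω i ∂ℙ := by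
      simpa [Pi.mul_apply] using hm
    rw [this, hED D₁ i (fun ω => (hbin ω i).1) (hmeas i).1 (hber i).1,
      hED D₂ i (fun ω => (hbin ω i).2) (hmeas i).2 (hber i).2]
    norm_num
  -- integrability of each term
  have hint : ∀ i : Fin d, Integrable (fun ω => D₁ ω i * D₂ ω i * (x i) ^ 2) ℙ := by
    intro i
    apply Integrable.mul_const
    apply MemLp.integrable le_rfl
    apply MemLp.of_bound (((hmeas i).1.mul (hmeas i).2).aestronglyMeasurable) 1
    filter_upwards with ω
    rcases hZ01 ω i with h | h <;> simp [h]
  -- expectation of Y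
  have hEY : ∫ ω, Y ω ∂ℙ = 1/4 := by
    rw [hY]
    simp only [div_eq_mul_inv]
    rw [integral_mul_const, integral_finset_sum _ fun i _ => hint i]
    have : ∀ i : Fin d, ∫ ω, D₁ ω i * D₂ ω i * (x i) ^ 2 ∂ℙ = (1/4) * (x i) ^ 2 := by
      intro i
      rw [integral_mul_const, hEZ i]
    rw [Finset.sum_congr rfl fun i _ => this i, ← Finset.mul_sum, ← hSnorm]
    field_simp
  -- variance bound
  rw [variance_eq_sub hYmem, hEY]
  have hsq : ∫ ω, (Y ^ 2) ω ∂ℙ ≤ ∫ ω, Y ω ∂ℙ := by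
    apply integral_mono hYmem.integrable_sq (hYmem.integrable one_le_two)
    intro ω
    simp only [Pi.pow_apply]
    nlinarith [hY0 ω, hY1 ω]
  have : (ℙ : Measure Ω)[Y ^ 2] ≤ 1/4 := by rw [← hEY]; exact hsq
  linarith
end
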